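/- arXiv:1508.01127 — 3 statements merged into one kernel-verified Lean document; each statement's English description precedes it below -/
import Mathlib

section
/- Diamond property for communication with replicated input: if T ≡ (νc)(c̄⟨z̃⟩ | !c(x̃).T₁ | c̄⟨ỹ⟩ | T₃), then the two steps consuming the two outputs on c with the replicated input commute, i.e., both T step T' and T step P' (reducing c̄⟨z̃⟩ and c̄⟨ỹ⟩ respectively) can be completed to a common process Q' ≡ (νc)(T₁[z̃/x̃] | T₁[ỹ/x̃] | !c(x̃).T₁ | T₃) with T' step Q' and P' step Q'. -/
/-- Asynchronous CCS with name passing: processes. -/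
inductive Proc (Name : Type) : Type
  | nil : Proc Name
  | par : Proc Name → Proc Name → Proc Name
  | res : List Name → Proc Name → Proc Name
  | repInput : Name → List Name → Proc Name → Proc Name
  | input : Name → List Name → Proc Name → Proc Name
  | output : Name → List Name → Proc Name
  | mtch : Name → Name → Proc Name → Proc Name
  | success : Proc Name

/-- A reduction semantics for asynchronous CCS with name passing: a (capture-avoiding)
substitution `subst P ys xs = P[ys/xs]`, a structural congruence `equiv`, and a
reduction relation `step` closed under the standard rules. -/
structure CCSSem (Name : Type) where
  subst : Proc Name → List Name → List Name → Proc Name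
  equiv : Proc Name → Proc Name → Prop
  step : Proc Name → Proc Name → Prop
  equiv_refl : ∀ P, equiv P P
  equiv_symm : ∀ {P Q}, equiv P Q → equiv Q P
  equiv_trans : ∀ {P Q R}, equiv P Q → equiv Q R → equiv P R
  par_nil : ∀ P, equiv (.par P .nil) P
  par_comm : ∀ P Q, equiv (.par P Q) (.par Q P)
  par_assoc : ∀ P Q R, equiv (.par P (.par Q R)) (.par (.par P Q) R)
  res_nil : ∀ cs, equiv (.res cs .nil) .nil
  mtch_eq : ∀ a P, equiv (.mtch a a P) P
  mtch_ne : ∀ a b P, a ≠ b → equiv (.mtch a b P) .nil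
  par_congr : ∀ {P P'} (Q), equiv P P' → equiv (.par P Q) (.par P' Q)
  res_congr : ∀ (cs) {P P'}, equiv P P' → equiv (.res cs P) (.res cs P')
  step_rep : ∀ c xs ys P,
    step (.par (.repInput c xs P) (.output c ys)) (.par (.repInput c xs P) (subst P ys xs))
  step_com : ∀ c xs ys Q, step (.par (.output c ys) (.input c xs Q)) (subst Q ys xs)
  step_par : ∀ {P P'} (Q), step P P' → step (.par P Q) (.par P' Q)
  step_res : ∀ (cs) {P P'}, step P P' → step (.res cs P) (.res cs P')
  step_cong : ∀ {P P' Q Q'}, equiv P P' → step P' Q' → equiv Q' Q → step P Q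

namespace CCSSem
variable {Name : Type} (C : CCSSem Name)

lemma par_congr_right {Q Q'} (P : Proc Name) (h : C.equiv Q Q') :
    C.equiv (.par P Q) (.par P Q') :=
  C.equiv_trans (C.par_comm P Q) (C.equiv_trans (C.par_congr P h) (C.par_comm Q' P))

lemma step_par_right {Q Q'} (P : Proc Name) (h : C.step Q Q') :
    C.step (.par P Q) (.par P Q') :=
  C.step_cong (C.par_comm P Q) (C.step_par P h) (C.par_comm Q' P)

/-- output on the left of the rep -/
lemma step_repL (c : Name) (xs ws : List Name) (P : Proc Name) :
    C.step (.par (.output c ws) (.repInput c xs P))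
      (.par (C.subst P ws xs) (.repInput c xs P)) :=
  C.step_cong (C.par_comm _ _) (C.step_rep c xs ws P) (C.par_comm _ _)

/-- rep in the middle, output on the far right -/
lemma step_repB (c : Name) (xs ws : List Name) (P X : Proc Name) :
    C.step (.par (.par X (.repInput c xs P)) (.output c ws))
      (.par (.par X (C.subst P ws xs)) (.repInput c xs P)) :=
  C.step_cong (C.equiv_symm (C.par_assoc X _ _))
    (C.step_par_right X (C.step_rep c xs ws P))
    (C.equiv_trans (C.par_congr_right X (C.par_comm _ _)) (C.par_assoc X _ _))

/-- output on the far left, rep on the right -/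
lemma step_repC (c : Name) (xs ws : List Name) (P Y : Proc Name) :
    C.step (.par (.par (.output c ws) Y) (.repInput c xs P))
      (.par (.par (C.subst P ws xs) Y) (.repInput c xs P)) :=
  C.step_cong
    (C.equiv_trans (C.par_comm _ _) (C.par_assoc _ _ Y))
    (C.step_par Y (C.step_rep c xs ws P))
    (C.equiv_trans (C.par_congr Y (C.par_comm _ _))
      (C.equiv_trans (C.equiv_symm (C.par_assoc _ _ Y))
        (C.equiv_trans (C.par_congr_right _ (C.par_comm _ Y)) (C.par_assoc _ Y _))))

end CCSSem

/-- Diamond property for communication with replicated input: if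
`T ≡ (νc)(c̄⟨z̃⟩ | !c(x̃).T₁ | c̄⟨ỹ⟩ | T₃)`, then the two steps consuming the two
outputs on `c` with the replicated input commute: both `T step T'` and `T step P'`
(reducing `c̄⟨z̃⟩` and `c̄⟨ỹ⟩` respectively) can be completed to a common process
`Q' ≡ (νc)(T₁[z̃/x̃] | T₁[ỹ/x̃] | !c(x̃).T₁ | T₃)` with `T' step Q'` and `P' step Q'`. -/
theorem diamond_replicated_input {Name : Type} (C : CCSSem Name) (c : Name)
    (zs ys xs : List Name) (T T₁ T₃ : Proc Name)
    (hT : C.equiv T (.res [c] (.par (.par (.par (.output c zs) (.repInput c xs T₁))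
      (.output c ys)) T₃))) :
    ∃ T' P' Q',
      C.step T T' ∧ C.step T P' ∧
      C.equiv T' (.res [c] (.par (.par (.par (C.subst T₁ zs xs) (.repInput c xs T₁))
        (.output c ys)) T₃)) ∧
      C.equiv P' (.res [c] (.par (.par (.par (.output c zs) (C.subst T₁ ys xs))
        (.repInput c xs T₁)) T₃)) ∧
      C.step T' Q' ∧ C.step P' Q' ∧
      C.equiv Q' (.res [c] (.par (.par (.par (C.subst T₁ zs xs) (C.subst T₁ ys xs))
        (.repInput c xs T₁)) T₃)) := by

  refine ⟨.res [c] (.par (.par (.par (C.subst T₁ zs xs) (.repInput c xs T₁))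
      (.output c ys)) T₃),
    .res [c] (.par (.par (.par (.output c zs) (C.subst T₁ ys xs))
      (.repInput c xs T₁)) T₃),
    .res [c] (.par (.par (.par (C.subst T₁ zs xs) (C.subst T₁ ys xs))
      (.repInput c xs T₁)) T₃),
    ?_, ?_, C.equiv_refl _, C.equiv_refl _, ?_, ?_, C.equiv_refl _⟩
  · exact C.step_cong hT
      (C.step_res [c] (C.step_par T₃ (C.step_par (.output c ys)
        (C.step_repL c xs zs T₁)))) (C.equiv_refl _)
  · exact C.step_cong hT
      (C.step_res [c] (C.step_par T₃ (C.step_repB c xs ys T₁ (.output c zs))))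
      (C.equiv_refl _)
  · exact C.step_res [c] (C.step_par T₃ (C.step_repB c xs ys T₁ (C.subst T₁ zs xs)))
  · exact C.step_res [c] (C.step_par T₃ (C.step_repC c xs zs T₁ (C.subst T₁ ys xs)))
end

section
/- Two reduction steps of a process that reduce the same replicated input but different outputs on the same channel are never in conflict: each can still be performed after the other, yielding structurally congruent end results. -/
lemma CCSSem.parR {Name : Type} (C : CCSSem Name) (P : Proc Name) {Q Q' : Proc Name}
    (h : C.equiv Q Q') : C.equiv (.par P Q) (.par P Q') :=
  C.equiv_trans (C.par_comm _ _) (C.equiv_trans (C.par_congr _ h) (C.par_comm _ _))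

lemma CCSSem.swap {Name : Type} (C : CCSSem Name) (P Q S : Proc Name) :
    C.equiv (.par (.par P Q) S) (.par (.par P S) Q) :=
  C.equiv_trans (C.equiv_symm (C.par_assoc P Q S))
    (C.equiv_trans (C.parR P (C.par_comm Q S)) (C.par_assoc P S Q))

/-- Two reduction steps of a process that reduce the same replicated input but
different outputs on the same channel are never in conflict: each can still be
performed after the other, yielding structurally congruent end results. -/
theorem replicated_input_steps_not_in_conflict {Name : Type} (C : CCSSem Name)
    (c : Name) (xs ys zs : List Name) (P R T T₁ T₂ : Proc Name)
    (hT : C.equiv T (.par (.par (.par (.repInput c xs P) (.output c ys)) (.output c zs)) R))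
    (hT₁ : C.equiv T₁
      (.par (.par (.par (.repInput c xs P) (C.subst P ys xs)) (.output c zs)) R))
    (hT₂ : C.equiv T₂
      (.par (.par (.par (.repInput c xs P) (.output c ys)) (C.subst P zs xs)) R)) :
    C.step T T₁ ∧ C.step T T₂ ∧
    ∃ Q₁ Q₂, C.step T₁ Q₁ ∧ C.step T₂ Q₂ ∧ C.equiv Q₁ Q₂ := by
  set A : Proc Name := .repInput c xs P
  refine ⟨?_, ?_, .par (.par (.par A (C.subst P ys xs)) (C.subst P zs xs)) R,
    .par (.par (.par A (C.subst P ys xs)) (C.subst P zs xs)) R, ?_, ?_, C.equiv_refl _⟩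
  · exact C.step_cong hT (C.step_par R (C.step_par _ (C.step_rep c xs ys P)))
      (C.equiv_symm hT₁)
  · refine C.step_cong (C.equiv_trans hT (C.par_congr R (C.swap A _ _)))
      (C.step_par R (C.step_par _ (C.step_rep c xs zs P)))
      (C.equiv_trans (C.par_congr R (C.swap A _ _)) (C.equiv_symm hT₂))
  · refine C.step_cong (C.equiv_trans hT₁ (C.par_congr R (C.swap _ _ _)))
      (C.step_par R (C.step_par _ (C.step_rep c xs zs P)))
      (C.par_congr R (C.swap A _ _))
  · exact C.step_cong hT₂ (C.step_par R (C.step_par _ (C.step_rep c xs ys P)))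
      (C.equiv_refl _)
end

section
/- From operational correspondence to bisimilarity: if an encoding enc satisfies (Completeness) S steps* S' implies ∃T, enc(S) steps* T ∧ enc(S') ≈ T, and (Soundness) enc(S) steps* T implies ∃S', S steps* S' ∧ enc(S') ≈ T, where ≈ is a success-sensitive, barb-respecting weak reduction bisimilarity on the target, and enc is success sensitive and barb sensitive, then every source term S is bisimilar to its translation: S ≈ enc(S) on the disjoint union of the source and target reduction systems. -/
/-- Reflexive-transitive closure of the reduction relation. -/
def Steps {P : Type*} (step : P → P → Prop) : P → P → Prop :=
  Relation.ReflTransGen step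

/-- A process reaches success if it reduces to a process with unguarded success. -/
def ReachSuccess {P : Type*} (step : P → P → Prop) (hasSuccess : P → Prop) (p : P) : Prop :=
  ∃ p', Steps step p p' ∧ hasSuccess p'

/-- Success-sensitive, barb-respecting, weak reduction bisimulation. -/
def IsBisimulation {P Name : Type*} (step : P → P → Prop) (hasSuccess : P → Prop)
    (reachBarb : P → Name → Prop) (R : P → P → Prop) : Prop :=
  ∀ p q, R p q →
    (∀ p', step p p' → ∃ q', Steps step q q' ∧ R p' q') ∧
    (∀ q', step q q' → ∃ p', Steps step p p' ∧ R p' q') ∧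
    (ReachSuccess step hasSuccess p ↔ ReachSuccess step hasSuccess q) ∧
    (∀ a, reachBarb p a ↔ reachBarb q a)

/-- Bisimilarity: two processes are bisimilar if some bisimulation relates them. -/
def Bisimilar {P Name : Type*} (step : P → P → Prop) (hasSuccess : P → Prop)
    (reachBarb : P → Name → Prop) (p q : P) : Prop :=
  ∃ R, IsBisimulation step hasSuccess reachBarb R ∧ R p q

/-- The reduction relation on the disjoint union of a source and a target
reduction system (no cross steps). -/
def SumStep {S T : Type*} (stepS : S → S → Prop) (stepT : T → T → Prop) :
    S ⊕ T → S ⊕ T → Prop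
  | Sum.inl a, Sum.inl b => stepS a b
  | Sum.inr a, Sum.inr b => stepT a b
  | _, _ => False

/-- Success on the disjoint union. -/
def SumSuccess {S T : Type*} (succS : S → Prop) (succT : T → Prop) : S ⊕ T → Prop
  | Sum.inl a => succS a
  | Sum.inr a => succT a

/-- Barbs on the disjoint union: source barbs on source processes and translated
barbs on target processes. -/
def SumBarb {S T Name : Type*} (barbS : S → Name → Prop) (tbarbT : T → Name → Prop) :
    S ⊕ T → Name → Prop
  | Sum.inl a => barbS a
  | Sum.inr a => tbarbT a

/-- Barb reachability derived from an immediate barb predicate. -/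
def ReachBarbOf {P Name : Type*} (step : P → P → Prop) (barb : P → Name → Prop) :
    P → Name → Prop :=
  fun p a => ∃ p', Steps step p p' ∧ barb p' a


section Aux

variable {P Name : Type*} {step : P → P → Prop} {hasSuccess : P → Prop}
  {reachBarb : P → Name → Prop}

theorem bisim_multistep {R : P → P → Prop}
    (hR : IsBisimulation step hasSuccess reachBarb R) :
    ∀ {p p'}, Steps step p p' → ∀ {q}, R p q → ∃ q', Steps step q q' ∧ R p' q' := by
  intro p p' h
  induction h with
  | refl => exact fun hq => ⟨_, Relation.ReflTransGen.refl, hq⟩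
  | tail hab hbc ih =>
    intro q hq
    obtain ⟨q', hq', hR'⟩ := ih hq
    obtain ⟨q'', hq'', hR''⟩ := (hR _ _ hR').1 _ hbc
    exact ⟨q'', hq'.trans hq'', hR''⟩

theorem IsBisimulation.flip {R : P → P → Prop}
    (hR : IsBisimulation step hasSuccess reachBarb R) :
    IsBisimulation step hasSuccess reachBarb (fun a b => R b a) := by
  intro p q h
  obtain ⟨h1, h2, h3, h4⟩ := hR q p h
  exact ⟨h2, h1, h3.symm, fun a => (h4 a).symm⟩

theorem Bisimilar.symm' {p q : P} (h : Bisimilar step hasSuccess reachBarb p q) :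
    Bisimilar step hasSuccess reachBarb q p := by
  obtain ⟨R, hR, hpq⟩ := h
  exact ⟨fun a b => R b a, hR.flip, hpq⟩

theorem Bisimilar.trans' {p q r : P} (h1 : Bisimilar step hasSuccess reachBarb p q)
    (h2 : Bisimilar step hasSuccess reachBarb q r) :
    Bisimilar step hasSuccess reachBarb p r := by
  obtain ⟨R, hR, hpq⟩ := h1
  obtain ⟨R', hR', hqr⟩ := h2
  refine ⟨fun a c => ∃ b, R a b ∧ R' b c, ?_, q, hpq, hqr⟩
  rintro a c ⟨b, hab, hbc⟩
  refine ⟨?_, ?_, ((hR a b hab).2.2.1).trans ((hR' b c hbc).2.2.1),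
    fun x => ((hR a b hab).2.2.2 x).trans ((hR' b c hbc).2.2.2 x)⟩
  · intro a' ha
    obtain ⟨b', hb, hRb⟩ := (hR a b hab).1 a' ha
    obtain ⟨c', hc, hRc⟩ := bisim_multistep hR' hb hbc
    exact ⟨c', hc, b', hRb, hRc⟩
  · intro c' hc
    obtain ⟨b', hb, hRb⟩ := (hR' b c hbc).2.1 c' hc
    obtain ⟨a', ha, hRa⟩ := bisim_multistep hR.flip hb (show (fun x y => R y x) b a from hab)
    exact ⟨a', ha, b', hRa, hRb⟩

theorem Bisimilar.multistep {p p' q : P} (h : Bisimilar step hasSuccess reachBarb p q)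
    (hs : Steps step p p') :
    ∃ q', Steps step q q' ∧ Bisimilar step hasSuccess reachBarb p' q' := by
  obtain ⟨R, hR, hpq⟩ := h
  obtain ⟨q', hq, hR'⟩ := bisim_multistep hR hs hpq
  exact ⟨q', hq, R, hR, hR'⟩

theorem Bisimilar.reachSuccess_iff {p q : P} (h : Bisimilar step hasSuccess reachBarb p q) :
    ReachSuccess step hasSuccess p ↔ ReachSuccess step hasSuccess q := by
  obtain ⟨R, hR, hpq⟩ := h
  exact (hR p q hpq).2.2.1

theorem Bisimilar.reachBarb_iff {p q : P} (h : Bisimilar step hasSuccess reachBarb p q) :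
    ∀ a, reachBarb p a ↔ reachBarb q a := by
  obtain ⟨R, hR, hpq⟩ := h
  exact (hR p q hpq).2.2.2

end Aux

section SumAux

variable {S T Name : Type*} {stepS : S → S → Prop} {stepT : T → T → Prop}

theorem steps_inl {s s' : S} (h : Steps stepS s s') :
    Steps (SumStep stepS stepT) (Sum.inl s) (Sum.inl s') := by
  induction h with
  | refl => exact Relation.ReflTransGen.refl
  | tail _ hbc ih => exact ih.tail hbc

theorem steps_inr {t t' : T} (h : Steps stepT t t') :
    Steps (SumStep stepS stepT) (Sum.inr t) (Sum.inr t') := by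
  induction h with
  | refl => exact Relation.ReflTransGen.refl
  | tail _ hbc ih => exact ih.tail hbc

theorem steps_from_inl {s : S} {x : S ⊕ T}
    (h : Steps (SumStep stepS stepT) (Sum.inl s) x) :
    ∃ s', x = Sum.inl s' ∧ Steps stepS s s' := by
  induction h with
  | refl => exact ⟨s, rfl, Relation.ReflTransGen.refl⟩
  | @tail b c hab hbc ih =>
    obtain ⟨s', rfl, hs⟩ := ih
    cases c with
    | inl s'' => exact ⟨s'', rfl, hs.tail hbc⟩
    | inr t'' => exact hbc.elim

theorem steps_from_inr {t : T} {x : S ⊕ T}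
    (h : Steps (SumStep stepS stepT) (Sum.inr t) x) :
    ∃ t', x = Sum.inr t' ∧ Steps stepT t t' := by
  induction h with
  | refl => exact ⟨t, rfl, Relation.ReflTransGen.refl⟩
  | @tail b c hab hbc ih =>
    obtain ⟨t', rfl, ht⟩ := ih
    cases c with
    | inl s'' => exact hbc.elim
    | inr t'' => exact ⟨t'', rfl, ht.tail hbc⟩

theorem sum_reachSuccess_inl {succS : S → Prop} {succT : T → Prop} {s : S} :
    ReachSuccess (SumStep stepS stepT) (SumSuccess succS succT) (Sum.inl s) ↔
      ReachSuccess stepS succS s := by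
  constructor
  · rintro ⟨x, hx, hsucc⟩
    obtain ⟨s', rfl, hs⟩ := steps_from_inl hx
    exact ⟨s', hs, hsucc⟩
  · rintro ⟨s', hs, hsucc⟩
    exact ⟨Sum.inl s', steps_inl hs, hsucc⟩

theorem sum_reachSuccess_inr {succS : S → Prop} {succT : T → Prop} {t : T} :
    ReachSuccess (SumStep stepS stepT) (SumSuccess succS succT) (Sum.inr t) ↔
      ReachSuccess stepT succT t := by
  constructor
  · rintro ⟨x, hx, hsucc⟩
    obtain ⟨t', rfl, ht⟩ := steps_from_inr hx
    exact ⟨t', ht, hsucc⟩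
  · rintro ⟨t', ht, hsucc⟩
    exact ⟨Sum.inr t', steps_inr ht, hsucc⟩

theorem sum_reachBarb_inl {barbS : S → Name → Prop} {tbarbT : T → Name → Prop} {s : S} {a : Name} :
    ReachBarbOf (SumStep stepS stepT) (SumBarb barbS tbarbT) (Sum.inl s) a ↔
      ReachBarbOf stepS barbS s a := by
  constructor
  · rintro ⟨x, hx, hb⟩
    obtain ⟨s', rfl, hs⟩ := steps_from_inl hx
    exact ⟨s', hs, hb⟩
  · rintro ⟨s', hs, hb⟩
    exact ⟨Sum.inl s', steps_inl hs, hb⟩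

theorem sum_reachBarb_inr {barbS : S → Name → Prop} {tbarbT : T → Name → Prop} {t : T} {a : Name} :
    ReachBarbOf (SumStep stepS stepT) (SumBarb barbS tbarbT) (Sum.inr t) a ↔
      ReachBarbOf stepT tbarbT t a := by
  constructor
  · rintro ⟨x, hx, hb⟩
    obtain ⟨t', rfl, ht⟩ := steps_from_inr hx
    exact ⟨t', ht, hb⟩
  · rintro ⟨t', ht, hb⟩
    exact ⟨Sum.inr t', steps_inr ht, hb⟩

end SumAux

/-- From operational correspondence to bisimilarity: if an encoding `enc` is
complete and sound w.r.t. a success-sensitive, barb-respecting weak reduction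
bisimilarity ≈ on the target, and `enc` is success sensitive and barb sensitive,
then every source term is bisimilar to its translation on the disjoint union of
the source and target reduction systems. -/
theorem operational_correspondence_bisimilarity
    {Src Tgt Name : Type*}
    (stepS : Src → Src → Prop) (succS : Src → Prop) (barbS : Src → Name → Prop)
    (stepT : Tgt → Tgt → Prop) (succT : Tgt → Prop) (tbarbT : Tgt → Name → Prop)
    (enc : Src → Tgt)
    -- (Completeness)
    (hcomplete : ∀ s s', Steps stepS s s' →
      ∃ t, Steps stepT (enc s) t ∧
        Bisimilar stepT succT (ReachBarbOf stepT tbarbT) (enc s') t)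
    -- (Soundness)
    (hsound : ∀ s t, Steps stepT (enc s) t →
      ∃ s', Steps stepS s s' ∧
        Bisimilar stepT succT (ReachBarbOf stepT tbarbT) (enc s') t)
    -- success sensitiveness of enc
    (hsucc : ∀ s, ReachSuccess stepS succS s ↔ ReachSuccess stepT succT (enc s))
    -- barb sensitiveness of enc
    (hbarb : ∀ s a, ReachBarbOf stepS barbS s a ↔ ReachBarbOf stepT tbarbT (enc s) a) :
    ∀ s : Src,
      Bisimilar (SumStep stepS stepT) (SumSuccess succS succT)
        (ReachBarbOf (SumStep stepS stepT) (SumBarb barbS tbarbT))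
        (Sum.inl s) (Sum.inr (enc s)) := by
  intro s
  set B := Bisimilar stepT succT (ReachBarbOf stepT tbarbT) with hB
  -- candidate relation on the disjoint union
  refine ⟨fun x y =>
    match x, y with
    | Sum.inl s, Sum.inr t => B (enc s) t
    | Sum.inr t, Sum.inr t' => B t t'
    | _, _ => False, ?_, ?_⟩
  swap
  · -- enc s ≈ enc s (reflexivity via identity bisimulation)
    refine ⟨Eq, ?_, rfl⟩
    rintro p q rfl
    exact ⟨fun p' h => ⟨p', Relation.ReflTransGen.single h, rfl⟩,
      fun q' h => ⟨q', Relation.ReflTransGen.single h, rfl⟩, Iff.rfl, fun _ => Iff.rfl⟩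
  · rintro (s₁ | t₁) (s₂ | t₂) hpq
    · exact absurd hpq (by simp)
    · -- source related to target: B (enc s₁) t₂
      refine ⟨?_, ?_, ?_, ?_⟩
      · rintro (s' | t') hstep
        · -- s₁ steps to s'
          have hstep' : stepS s₁ s' := hstep
          obtain ⟨t, ht, hbis⟩ := hcomplete s₁ s' (Relation.ReflTransGen.single hstep')
          obtain ⟨t', ht', hbis'⟩ := hpq.multistep ht
          exact ⟨Sum.inr t', steps_inr ht', hbis.trans' hbis'⟩
        · exact absurd hstep (by simp [SumStep])
      · rintro (s' | t') hstep
        · exact absurd hstep (by simp [SumStep])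
        · have hstep' : stepT t₂ t' := hstep
          obtain ⟨t₀, ht₀, hbis⟩ := hpq.symm'.multistep (Relation.ReflTransGen.single hstep')
          obtain ⟨s', hs', hbis'⟩ := hsound s₁ t₀ ht₀
          exact ⟨Sum.inl s', steps_inl hs', hbis'.trans' hbis.symm'⟩
      · rw [sum_reachSuccess_inl, sum_reachSuccess_inr, hsucc s₁]
        exact hpq.reachSuccess_iff
      · intro a
        rw [sum_reachBarb_inl, sum_reachBarb_inr, hbarb s₁ a]
        exact hpq.reachBarb_iff a
    · exact absurd hpq (by simp)
    · -- two targets: B t₁ t₂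
      refine ⟨?_, ?_, ?_, ?_⟩
      · rintro (s' | t') hstep
        · exact absurd hstep (by simp [SumStep])
        · have hstep' : stepT t₁ t' := hstep
          obtain ⟨t'', ht'', hbis⟩ := hpq.multistep (Relation.ReflTransGen.single hstep')
          exact ⟨Sum.inr t'', steps_inr ht'', hbis⟩
      · rintro (s' | t') hstep
        · exact absurd hstep (by simp [SumStep])
        · have hstep' : stepT t₂ t' := hstep
          obtain ⟨t'', ht'', hbis⟩ := hpq.symm'.multistep (Relation.ReflTransGen.single hstep')
          exact ⟨Sum.inr t'', steps_inr ht'', hbis.symm'⟩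
      · rw [sum_reachSuccess_inr, sum_reachSuccess_inr]
        exact hpq.reachSuccess_iff
      · intro a
        rw [sum_reachBarb_inr, sum_reachBarb_inr]
        exact hpq.reachBarb_iff a
end
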